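/- Let X and Y be real Hilbert spaces, let A : X → X, C : X → Y and K : Y → X be bounded linear operators, and let T > 0. Assume ‖exp(sA)‖ ≤ 1 for all s ∈ [0,T]. Then for every x ∈ X and every t ∈ [0,T], ‖C (exp(tA) x) − C (exp(t(A − K∘C)) x)‖_Y ≤ ‖C‖·‖K‖·√t · (∫₀^t ‖C (exp(s(A − K∘C)) x)‖²_Y ds)^{1/2}. -/

import Mathlib

set_option synthInstance.maxHeartbeats 1000000
open MeasureTheory NormedSpace

lemma cs_aux {φ : ℝ → ℝ} (hφ : Continuous φ) (hφ0 : ∀ s, 0 ≤ φ s) {t : ℝ} (ht : 0 ≤ t) :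
    ∫ s in (0:ℝ)..t, φ s ≤ Real.sqrt t * Real.sqrt (∫ s in (0:ℝ)..t, φ s ^ 2) := by
  rw [intervalIntegral.integral_of_le ht, intervalIntegral.integral_of_le ht]
  set μ := volume.restrict (Set.Ioc (0:ℝ) t) with hμ
  have hfin : IsFiniteMeasure μ := by
    constructor
    rw [hμ, Measure.restrict_apply_univ, Real.volume_Ioc]
    exact ENNReal.ofReal_lt_top
  have hpq : (2:ℝ).HolderConjugate 2 := by constructor <;> norm_num
  -- bound φ on [0, t]
  obtain ⟨M, hM⟩ : ∃ M, ∀ s ∈ Set.Ioc (0:ℝ) t, ‖φ s‖ ≤ M := by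
    obtain ⟨M, hM⟩ := (isCompact_Icc (a := (0:ℝ)) (b := t)).exists_bound_of_continuousOn
      hφ.continuousOn
    exact ⟨M, fun s hs => hM s (Set.Ioc_subset_Icc_self hs)⟩
  have hmem : MemLp φ (ENNReal.ofReal 2) μ := by
    refine MemLp.of_bound (hφ.aestronglyMeasurable) M ?_
    rw [hμ]
    exact (ae_restrict_iff' measurableSet_Ioc).2 (Filter.Eventually.of_forall hM)
  have hmem1 : MemLp (fun _ : ℝ => (1:ℝ)) (ENNReal.ofReal 2) μ := memLp_const 1
  have h := integral_mul_le_Lp_mul_Lq_of_nonneg hpq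
    (Filter.Eventually.of_forall hφ0) (Filter.Eventually.of_forall (fun _ => zero_le_one))
    hmem hmem1
  simp only [mul_one, Real.one_rpow] at h
  have h1 : ∫ _ : ℝ, (1:ℝ) ∂μ = t := by
    rw [hμ, setIntegral_const, smul_eq_mul, mul_one, Real.volume_real_Ioc_of_le ht]
    ring
  rw [h1] at h
  have hint2 : (0:ℝ) ≤ ∫ a, φ a ^ (2:ℝ) ∂μ := integral_nonneg fun a => by
    have := hφ0 a; positivity
  have e1 : (∫ a, φ a ^ (2:ℝ) ∂μ) ^ (1/(2:ℝ)) = Real.sqrt (∫ s, φ s ^ (2:ℕ) ∂μ) := by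
    rw [Real.sqrt_eq_rpow]
    congr 1
    refine integral_congr_ae (Filter.Eventually.of_forall fun a => ?_)
    show φ a ^ (2:ℝ) = φ a ^ (2:ℕ)
    rw [show ((2:ℝ)) = ((2:ℕ):ℝ) by norm_num, Real.rpow_natCast]
  have e2 : (t:ℝ) ^ (1/(2:ℝ)) = Real.sqrt t := (Real.sqrt_eq_rpow t).symm
  rw [e1, e2] at h
  linarith [h]

theorem stmt_1
    {X : Type*} [NormedAddCommGroup X] [InnerProductSpace ℝ X] [CompleteSpace X]
    {Y : Type*} [NormedAddCommGroup Y] [InnerProductSpace ℝ Y] [CompleteSpace Y]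
    (A : X →L[ℝ] X) (C : X →L[ℝ] Y) (K : Y →L[ℝ] X)
    (T : ℝ) (hT : 0 < T)
    (hcontr : ∀ s ∈ Set.Icc (0 : ℝ) T, ‖exp (s • A)‖ ≤ 1) :
    ∀ x : X, ∀ t ∈ Set.Icc (0 : ℝ) T,
      ‖C (exp (t • A) x) - C (exp (t • (A - K ∘L C)) x)‖ ≤
        ‖C‖ * ‖K‖ * Real.sqrt t *
          Real.sqrt (∫ s in (0 : ℝ)..t, ‖C (exp (s • (A - K ∘L C)) x)‖ ^ 2) := by
  intro x t ht
  obtain ⟨ht0, htT⟩ := ht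
  set B : X →L[ℝ] X := A - K ∘L C with hB
  -- continuity facts
  have hcexpB : Continuous fun s : ℝ => exp (s • B) :=
    (continuous_iff_continuousAt.2 fun y => (exp_analytic (𝕂 := ℝ) y).continuousAt).comp (continuous_id.smul continuous_const)
  have hcexpA : Continuous fun s : ℝ => exp ((t - s) • A) :=
    (continuous_iff_continuousAt.2 fun y => (exp_analytic (𝕂 := ℝ) y).continuousAt).comp ((continuous_const.sub continuous_id).smul continuous_const)
  set D : ℝ → X := fun s => exp ((t - s) • A) ((K ∘L C) (exp (s • B) x)) with hD
  have hcD : Continuous D :=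
    hcexpA.clm_apply (continuous_const.clm_apply (hcexpB.clm_apply continuous_const))
  -- Duhamel
  set F : ℝ → X := fun s => exp ((t - s) • A) (exp (s • B) x) with hF
  have hderiv : ∀ s : ℝ, HasDerivAt F (-(D s)) s := by
    intro s
    have h1 : HasDerivAt (fun u : ℝ => exp (u • A)) (exp ((t - s) • A) * A) (t - s) :=
      hasDerivAt_exp_smul_const A (t - s)
    have h2 : HasDerivAt (fun u : ℝ => t - u) (-1) s := by
      simpa using ((hasDerivAt_id s).const_sub t)
    have hg : HasDerivAt (fun u : ℝ => exp ((t - u) • A))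
        ((-1 : ℝ) • (exp ((t - s) • A) * A)) s := h1.scomp s h2
    have hh : HasDerivAt (fun u : ℝ => exp (u • B) x)
        ((exp (s • B) * B) x) s := by
      simpa using (hasDerivAt_exp_smul_const B s).clm_apply (hasDerivAt_const s x)
    have := hg.clm_apply hh
    convert this using 1
    have hcomm : exp (s • B) * B = B * exp (s • B) :=
      (((Commute.refl B).smul_right s).exp_right).symm.eq
    simp only [neg_smul, one_smul, ContinuousLinearMap.neg_apply, ContinuousLinearMap.mul_apply,
      hcomm]
    rw [hD]
    simp only [hB]
    simp [ContinuousLinearMap.sub_apply, ContinuousLinearMap.comp_apply]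
    abel
  have hFTC : ∫ s in (0:ℝ)..t, -(D s) = F t - F 0 := by
    refine intervalIntegral.integral_eq_sub_of_hasDerivAt (fun s _ => hderiv s) ?_
    exact (hcD.neg).intervalIntegrable 0 t
  have hF0 : F 0 = exp (t • A) x := by simp [hF, exp_zero]
  have hFt : F t = exp (t • B) x := by simp [hF, exp_zero]
  have hDuh : exp (t • A) x - exp (t • B) x = ∫ s in (0:ℝ)..t, D s := by
    rw [intervalIntegral.integral_neg] at hFTC
    rw [hF0, hFt] at hFTC
    linear_combination (norm := module) hFTC
  have hDint : IntervalIntegrable D volume 0 t := hcD.intervalIntegrable 0 t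
  have hCD : C (exp (t • A) x) - C (exp (t • B) x) = ∫ s in (0:ℝ)..t, C (D s) := by
    rw [← map_sub, hDuh, ContinuousLinearMap.intervalIntegral_comp_comm C hDint]
  set φ : ℝ → ℝ := fun s => ‖C (exp (s • B) x)‖ with hφdef
  have hφcont : Continuous φ :=
    (continuous_const.clm_apply (hcexpB.clm_apply continuous_const)).norm
  have hφ0 : ∀ s, 0 ≤ φ s := fun s => norm_nonneg _
  have hbound : ∀ s ∈ Set.Icc (0:ℝ) t, ‖C (D s)‖ ≤ ‖C‖ * ‖K‖ * φ s := by
    intro s hs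
    have hts : t - s ∈ Set.Icc (0:ℝ) T := ⟨by linarith [hs.2], by linarith [hs.1]⟩
    have h1 : ‖C (D s)‖ ≤ ‖C‖ * ‖D s‖ := C.le_opNorm _
    have h2 : ‖D s‖ ≤ ‖exp ((t - s) • A)‖ * ‖(K ∘L C) (exp (s • B) x)‖ :=
      (exp ((t - s) • A)).le_opNorm _
    have h3 : ‖(K ∘L C) (exp (s • B) x)‖ ≤ ‖K‖ * φ s := K.le_opNorm _
    have h4 := hcontr (t - s) hts
    have h5 : ‖D s‖ ≤ ‖K‖ * φ s := by
      calc ‖D s‖ ≤ ‖exp ((t - s) • A)‖ * ‖(K ∘L C) (exp (s • B) x)‖ := h2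
        _ ≤ 1 * (‖K‖ * φ s) :=
            mul_le_mul h4 h3 (norm_nonneg _) zero_le_one
        _ = ‖K‖ * φ s := one_mul _
    calc ‖C (D s)‖ ≤ ‖C‖ * ‖D s‖ := h1
      _ ≤ ‖C‖ * (‖K‖ * φ s) := by
          exact mul_le_mul_of_nonneg_left h5 (norm_nonneg _)
      _ = ‖C‖ * ‖K‖ * φ s := by ring
  have hstep1 : ‖C (exp (t • A) x) - C (exp (t • B) x)‖ ≤
      ∫ s in (0:ℝ)..t, ‖C (D s)‖ := by
    rw [hCD]
    exact intervalIntegral.norm_integral_le_integral_norm ht0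
  have hstep2 : (∫ s in (0:ℝ)..t, ‖C (D s)‖) ≤ ∫ s in (0:ℝ)..t, ‖C‖ * ‖K‖ * φ s := by
    refine intervalIntegral.integral_mono_on ht0 ?_ ?_ hbound
    · exact ((continuous_const.clm_apply hcD).norm).intervalIntegrable 0 t
    · exact ((continuous_const.mul hφcont)).intervalIntegrable 0 t
  have hstep3 : (∫ s in (0:ℝ)..t, ‖C‖ * ‖K‖ * φ s) = ‖C‖ * ‖K‖ * ∫ s in (0:ℝ)..t, φ s := by
    rw [← intervalIntegral.integral_const_mul]
  have hcs := cs_aux hφcont hφ0 ht0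
  have hfinal : ‖C‖ * ‖K‖ * ∫ s in (0:ℝ)..t, φ s ≤
      ‖C‖ * ‖K‖ * (Real.sqrt t * Real.sqrt (∫ s in (0:ℝ)..t, φ s ^ 2)) :=
    mul_le_mul_of_nonneg_left hcs (by positivity)
  calc ‖C (exp (t • A) x) - C (exp (t • B) x)‖
      ≤ ∫ s in (0:ℝ)..t, ‖C (D s)‖ := hstep1
    _ ≤ ∫ s in (0:ℝ)..t, ‖C‖ * ‖K‖ * φ s := hstep2
    _ = ‖C‖ * ‖K‖ * ∫ s in (0:ℝ)..t, φ s := hstep3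
    _ ≤ ‖C‖ * ‖K‖ * (Real.sqrt t * Real.sqrt (∫ s in (0:ℝ)..t, φ s ^ 2)) := hfinal
    _ = ‖C‖ * ‖K‖ * Real.sqrt t * Real.sqrt (∫ s in (0:ℝ)..t, φ s ^ 2) := by ring
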